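/- arXiv:2507.21449 — 5 statements merged into one kernel-verified Lean document; each statement's English description precedes it below -/
import Mathlib

section
/- Fix an integer M ≥ 1, layer sizes H_0, …, H_M ≥ 1, and for l = 1, …, M let W_l be the H_l × H_{l−1} matrix of distinct indeterminates w_{i,j,l}, with product W = W_M ⋯ W_1 whose entries are the polynomials P_{ij}. For every nonzero vector x ∈ ℝ^N (N = H_0) and every index 1 ≤ i ≤ H_M, the polynomial Σ_{j=1}^N P_{ij} x_j (a polynomial in the variables w_{i,j,l}) is not the zero polynomial. -/
open MvPolynomial

/-- Index type for the distinct indeterminates `w_{i,j,l}`: the `(i,j)` entry of the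
`l`-th weight matrix of a deep linear network with layer sizes `H 0, H 1, …`. -/
abbrev DlnVarIdx (H : ℕ → ℕ) := (l : ℕ) × (Fin (H (l + 1)) × Fin (H l))

/-- The `l`-th weight matrix whose entries are the indeterminates `w_{i,j,l}`. -/
noncomputable def dlnWmat (H : ℕ → ℕ) (l : ℕ) :
    Matrix (Fin (H (l + 1))) (Fin (H l)) (MvPolynomial (DlnVarIdx H) ℝ) :=
  Matrix.of fun i j => MvPolynomial.X ⟨l, (i, j)⟩

/-- The matrix product `W = W_M W_{M-1} ⋯ W_1` of the indeterminate matrices. -/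
noncomputable def dlnPprod (H : ℕ → ℕ) :
    (M : ℕ) → Matrix (Fin (H M)) (Fin (H 0)) (MvPolynomial (DlnVarIdx H) ℝ)
  | 0 => 1
  | M + 1 => dlnWmat H M * dlnPprod H M

/-- for every nonzero `x ∈ ℝ^N` and every row index `i`, the polynomial
`Σ_j P_{ij} x_j` is not the zero polynomial. -/
theorem dln_product_applied_to_nonzero_vector_ne_zero
    (M : ℕ) (hM : 1 ≤ M) (H : ℕ → ℕ) (hH : ∀ l ≤ M, 1 ≤ H l)
    (x : Fin (H 0) → ℝ) (hx : x ≠ 0) (i : Fin (H M)) :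
    (∑ j : Fin (H 0), dlnPprod H M i j * MvPolynomial.C (x j)) ≠ 0 := by
  obtain ⟨j0, hj0⟩ : ∃ j, x j ≠ 0 := by
    by_contra h; push_neg at h; exact hx (funext h)
  -- the "path" of indices: input j0, output i, index 0 in between
  set c : ℕ → ℕ := fun l => if l = 0 then (j0 : ℕ) else if l = M then (i : ℕ) else 0 with hc
  set σ : DlnVarIdx H → ℝ :=
    fun v => if (v.2.1 : ℕ) = c (v.1 + 1) ∧ (v.2.2 : ℕ) = c v.1 then 1 else 0 with hσ
  have key : ∀ m, 1 ≤ m → m ≤ M → ∀ (a : Fin (H m)) (b : Fin (H 0)),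
      aeval σ (dlnPprod H m a b) = if (a : ℕ) = c m ∧ (b : ℕ) = c 0 then 1 else 0 := by
    intro m
    induction m with
    | zero => omega
    | succ n ih =>
      intro _ hle a b
      have hstep : dlnPprod H (n + 1) a b
          = ∑ k : Fin (H n), MvPolynomial.X (⟨n, (a, k)⟩ : DlnVarIdx H) * dlnPprod H n k b := by
        show (dlnWmat H n * dlnPprod H n) a b = _
        rw [Matrix.mul_apply]; rfl
      rw [hstep, map_sum]
      rcases Nat.eq_zero_or_pos n with h0 | hpos
      · subst h0
        -- dlnPprod H 0 = 1
        have : ∀ k : Fin (H 0),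
            aeval σ (MvPolynomial.X (⟨0, (a, k)⟩ : DlnVarIdx H) * dlnPprod H 0 k b)
            = (if (a : ℕ) = c 1 ∧ (k : ℕ) = c 0 then 1 else 0) * (if k = b then 1 else 0) := by
          intro k
          rw [show dlnPprod H 0 k b = if k = b then 1 else 0 from Matrix.one_apply ..]
          rw [map_mul, aeval_X]
          congr 1
          split_ifs <;> simp
        simp only [this]
        rw [Finset.sum_eq_single b]
        · simp [Fin.val_eq_val]
        · intro k _ hk; simp [hk]
        · simp
      · -- n ≥ 1
        have hcn : c n < H n := by
          have h1 : 1 ≤ H n := hH n (by omega)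
          have h0 : 1 ≤ H 0 := hH 0 (by omega)
          have hM' : 1 ≤ H M := hH M le_rfl
          simp only [hc]
          split_ifs with e1 e2
          · omega
          · subst e2; exact i.isLt
          · omega
        have : ∀ k : Fin (H n),
            aeval σ (MvPolynomial.X (⟨n, (a, k)⟩ : DlnVarIdx H) * dlnPprod H n k b)
            = (if (a : ℕ) = c (n + 1) ∧ (k : ℕ) = c n then 1 else 0)
              * (if (k : ℕ) = c n ∧ (b : ℕ) = c 0 then 1 else 0) := by
          intro k
          rw [map_mul, aeval_X, ih hpos (by omega) k b]
        simp only [this]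
        rw [Finset.sum_eq_single (⟨c n, hcn⟩ : Fin (H n))]
        · by_cases h1 : (a : ℕ) = c (n + 1) <;> by_cases h2 : (b : ℕ) = c 0 <;> simp [h1, h2]
        · intro k _ hk
          have : (k : ℕ) ≠ c n := fun h => hk (Fin.ext h)
          simp [this]
        · simp
  have hval : aeval σ (∑ j : Fin (H 0), dlnPprod H M i j * MvPolynomial.C (x j)) = x j0 := by
    rw [map_sum]
    have : ∀ j : Fin (H 0),
        aeval σ (dlnPprod H M i j * MvPolynomial.C (x j))
        = (if (i : ℕ) = c M ∧ (j : ℕ) = c 0 then 1 else 0) * x j := by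
      intro j
      rw [map_mul, aeval_C, key M hM le_rfl i j]
      simp
    simp only [this]
    have hiM : (i : ℕ) = c M := by simp only [hc]; split_ifs with e <;> omega
    have hc0 : c 0 = (j0 : ℕ) := by simp [hc]
    rw [Finset.sum_eq_single j0]
    · simp [hiM, hc0]
    · intro k _ hk
      have : (k : ℕ) ≠ c 0 := by rw [hc0]; exact fun h => hk (Fin.ext h)
      simp [this]
    · simp
  intro h
  rw [h, map_zero] at hval
  exact hj0 hval.symm
end

section
/- Let p : ℝ^d → ℝ be (the evaluation of) a multivariate polynomial, and suppose there exist constants a, b ≥ 0 such that ‖∇p(w)‖ ≤ a + b‖w‖ for all w ∈ ℝ^d. Then p has total degree at most 2. -/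
open MvPolynomial

/-- The gradient of (the evaluation of) a multivariate polynomial `p` on `ℝ^d`:
the vector of partial derivatives `∂p/∂w_i` evaluated at `w`. -/
noncomputable def polyGradient {d : ℕ} (p : MvPolynomial (Fin d) ℝ)
    (w : EuclideanSpace ℝ (Fin d)) : EuclideanSpace ℝ (Fin d) :=
  WithLp.toLp 2 (fun i => MvPolynomial.eval (fun j => w j) (MvPolynomial.pderiv i p))

section Aux

variable {d : ℕ} (v : Fin d → ℝ)

/-- substitution X i ↦ v i * X -/
noncomputable def lineSubst (p : MvPolynomial (Fin d) ℝ) : Polynomial ℝ :=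
  MvPolynomial.aeval (fun i => Polynomial.C (v i) * Polynomial.X) p

lemma lineSubst_coeff (n : ℕ) (p : MvPolynomial (Fin d) ℝ) :
    (lineSubst v p).coeff n = MvPolynomial.eval v (homogeneousComponent n p) := by
  induction p using MvPolynomial.induction_on' with
  | monomial u a =>
    have hprod : ((u.prod fun i k => (Polynomial.C (v i) * Polynomial.X) ^ k) : Polynomial ℝ)
        = Polynomial.C (u.prod fun i k => v i ^ k) * Polynomial.X ^ (u.sum fun _ k => k) := by
      rw [Finsupp.prod, Finsupp.prod, Finsupp.sum, map_prod, ← Finset.prod_pow_eq_pow_sum,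
        ← Finset.prod_mul_distrib]
      exact Finset.prod_congr rfl fun i _ => by rw [mul_pow, map_pow]
    have hHC : homogeneousComponent n (monomial u a)
        = if (u.sum fun _ e => e) = n then monomial u a else 0 := by
      refine MvPolynomial.ext _ _ fun m => ?_
      rw [coeff_homogeneousComponent, apply_ite (coeff m), coeff_zero]
      by_cases hum : u = m
      · subst hum
        have hdeg : u.degree = u.sum fun _ e => e := rfl
        rw [hdeg]
      · have hz : coeff m (monomial u a) = 0 := by rw [coeff_monomial, if_neg hum]
        rw [hz, ite_self, ite_self]
    rw [lineSubst, aeval_monomial, hprod, ← mul_assoc, Polynomial.algebraMap_eq, ← map_mul,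
      Polynomial.coeff_C_mul, Polynomial.coeff_X_pow, hHC]
    by_cases hcase : (u.sum fun _ e => e) = n
    · rw [if_pos hcase.symm, if_pos hcase, mul_one, eval_monomial]
    · rw [if_neg (fun hh => hcase hh.symm), if_neg hcase, mul_zero, map_zero]
  | add p q hp hq =>
    rw [lineSubst, map_add, Polynomial.coeff_add, map_add, map_add]
    rw [lineSubst] at hp hq
    rw [hp, hq]

lemma lineSubst_eval (t : ℝ) (p : MvPolynomial (Fin d) ℝ) :
    Polynomial.eval t (lineSubst v p) = MvPolynomial.eval (fun j => v j * t) p := by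
  induction p using MvPolynomial.induction_on with
  | C a => simp [lineSubst]
  | add p q hp hq => simp_all [lineSubst]
  | mul_X p i hp => simp_all [lineSubst]

lemma lineSubst_derivative (p : MvPolynomial (Fin d) ℝ) :
    Polynomial.derivative (lineSubst v p)
      = ∑ i, Polynomial.C (v i) * lineSubst v (pderiv i p) := by
  induction p using MvPolynomial.induction_on with
  | C a => simp [lineSubst]
  | add p q hp hq =>
    simp only [lineSubst] at hp hq ⊢
    simp [map_add, hp, hq, mul_add, Finset.sum_add_distrib]
  | mul_X p i hp =>
    simp only [lineSubst] at hp ⊢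
    have hpd : ∀ j : Fin d, (pderiv j) (p * X i)
        = X i * pderiv j p + if i = j then p else 0 := by
      intro j
      rw [Derivation.leibniz, pderiv_X, Pi.single_apply, smul_eq_mul, smul_eq_mul]
      split_ifs <;> ring
    have hpd2 : ∀ j : Fin d,
        (aeval fun i => Polynomial.C (v i) * Polynomial.X) ((pderiv j) (p * X i))
        = (Polynomial.C (v i) * Polynomial.X) *
            (aeval fun i => Polynomial.C (v i) * Polynomial.X) (pderiv j p)
          + if i = j then (aeval fun i => Polynomial.C (v i) * Polynomial.X) p else 0 := by
      intro j
      rw [hpd]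
      split_ifs <;> simp [map_add, map_mul, aeval_X]
    rw [map_mul, aeval_X, Polynomial.derivative_mul, hp, Finset.sum_mul]
    simp only [hpd2, mul_add, mul_ite, mul_zero, Finset.sum_add_distrib, Finset.sum_ite_eq,
      Finset.mem_univ, if_true]
    have hder : Polynomial.derivative (Polynomial.C (v i) * Polynomial.X)
        = Polynomial.C (v i) := by simp
    rw [hder]
    congr 1
    · exact Finset.sum_congr rfl fun j _ => by ring
    · ring

end Aux

/-- growth bound implies degree ≤ 1 -/
lemma natDegree_le_one_of_linear_growth (r : Polynomial ℝ) (A B : ℝ)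
    (h : ∀ t : ℝ, 0 ≤ t → |Polynomial.eval t r| ≤ A + B * t) :
    r.natDegree ≤ 1 := by
  by_cases hr : r = 0
  · simp [hr]
  have hX : (Polynomial.X ^ 2 : Polynomial ℝ) ≠ 0 := pow_ne_zero _ Polynomial.X_ne_zero
  have hdiv : Filter.Tendsto
      (fun x => Polynomial.eval x r / Polynomial.eval x (Polynomial.X ^ 2 : Polynomial ℝ))
      Filter.atTop (nhds 0) := by
    simp only [Polynomial.eval_pow, Polynomial.eval_X]
    have hb : Filter.Tendsto (fun x : ℝ => (A + B * x) / x ^ 2) Filter.atTop (nhds 0) := by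
      have heq : (fun x : ℝ => (A + B * x) / x ^ 2) =ᶠ[Filter.atTop]
          fun x => A / x ^ 2 + B / x := by
        filter_upwards [Filter.eventually_gt_atTop (0:ℝ)] with x hx
        field_simp
      rw [Filter.tendsto_congr' heq]
      have h1 : Filter.Tendsto (fun x : ℝ => A / x ^ 2) Filter.atTop (nhds 0) :=
        Filter.Tendsto.div_atTop tendsto_const_nhds (Filter.tendsto_pow_atTop two_ne_zero)
      have h2 : Filter.Tendsto (fun x : ℝ => B / x) Filter.atTop (nhds 0) :=
        Filter.Tendsto.div_atTop tendsto_const_nhds Filter.tendsto_id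
      simpa using h1.add h2
    refine (tendsto_zero_iff_abs_tendsto_zero _).mpr (squeeze_zero' ?_ ?_ hb)
    · filter_upwards with x using abs_nonneg _
    · filter_upwards [Filter.eventually_ge_atTop (1:ℝ)] with x hx
      show |Polynomial.eval x r / x ^ 2| ≤ (A + B * x) / x ^ 2
      rw [abs_div, abs_of_nonneg (sq_nonneg x)]
      have hx2 : (0:ℝ) < x ^ 2 := by nlinarith
      exact (div_le_div_iff_of_pos_right hx2).mpr (h x (by linarith))
  have hlt := (Polynomial.div_tendsto_zero_iff_degree_lt r (Polynomial.X ^ 2) hX).mp hdiv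
  rw [Polynomial.degree_X_pow] at hlt
  have h2 : r.natDegree < 2 := by
    have := (Polynomial.natDegree_lt_iff_degree_lt (n := 2) hr).mpr (by exact_mod_cast hlt)
    exact this
  omega

/-- if the gradient of a multivariate polynomial grows at most linearly,
i.e. `‖∇p(w)‖ ≤ a + b‖w‖` for all `w` with constants `a, b ≥ 0`, then `p` has total
degree at most `2`. -/
theorem polynomial_totalDegree_le_two_of_gradient_linear_growth
    (d : ℕ) (p : MvPolynomial (Fin d) ℝ) (a b : ℝ) (ha : 0 ≤ a) (hb : 0 ≤ b)
    (h : ∀ w : EuclideanSpace ℝ (Fin d), ‖polyGradient p w‖ ≤ a + b * ‖w‖) :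
    p.totalDegree ≤ 2 := by

  by_contra hn
  push_neg at hn
  have hp0 : p ≠ 0 := by rintro rfl; simp [totalDegree_zero] at hn
  set n := p.totalDegree with hns
  obtain ⟨m, hm, hms⟩ := Finset.exists_mem_eq_sup p.support
    (MvPolynomial.support_nonempty.mpr hp0) (fun m : Fin d →₀ ℕ => m.sum fun _ e => e)
  have hhc : homogeneousComponent n p ≠ 0 := by
    intro h0
    have hcm := coeff_homogeneousComponent (φ := p) n m
    rw [h0] at hcm
    simp only [coeff_zero] at hcm
    rw [if_pos (show m.degree = n by
      show (∑ i ∈ m.support, m i) = n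
      rw [hns, totalDegree, hms]; rfl)] at hcm
    exact (mem_support_iff.mp hm) hcm.symm
  have hv : ∃ v : Fin d → ℝ, MvPolynomial.eval v (homogeneousComponent n p) ≠ 0 := by
    by_contra hc
    push_neg at hc
    exact hhc (MvPolynomial.funext fun x => by rw [hc x, map_zero])
  obtain ⟨v, hv⟩ := hv
  set q := lineSubst v p with hq
  have hcoeff : q.coeff n ≠ 0 := by rw [hq, lineSubst_coeff]; exact hv
  set vE : EuclideanSpace ℝ (Fin d) := (WithLp.equiv 2 (Fin d → ℝ)).symm v with hvEdef
  have hvbound : ∀ t : ℝ, 0 ≤ t →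
      |Polynomial.eval t (Polynomial.derivative q)| ≤
        a * ‖vE‖ + b * ‖vE‖ ^ 2 * t := by
    intro t ht
    set w : EuclideanSpace ℝ (Fin d) := t • vE with hw
    have hwj : (fun j => v j * t) = (fun j => w j) := by
      funext j
      show v j * t = (t • vE) j
      rw [PiLp.smul_apply, smul_eq_mul, mul_comm]
      rfl
    have heval : Polynomial.eval t (Polynomial.derivative q)
        = ∑ i, v i * polyGradient p w i := by
      rw [hq, lineSubst_derivative, Polynomial.eval_finset_sum]
      refine Finset.sum_congr rfl fun i _ => ?_
      rw [Polynomial.eval_mul, Polynomial.eval_C, lineSubst_eval, hwj]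
      rfl
    have hinner : ∑ i, v i * polyGradient p w i = inner ℝ vE (polyGradient p w) := by
      rw [PiLp.inner_apply]
      exact Finset.sum_congr rfl fun i _ => by simp [hvEdef, mul_comm]
    rw [heval, hinner]
    calc |inner ℝ vE (polyGradient p w)| ≤ ‖vE‖ * ‖polyGradient p w‖ :=
          abs_real_inner_le_norm _ _
      _ ≤ ‖vE‖ * (a + b * ‖w‖) := mul_le_mul_of_nonneg_left (h w) (norm_nonneg _)
      _ = a * ‖vE‖ + b * ‖vE‖ ^ 2 * t := by
          rw [hw, norm_smul, Real.norm_eq_abs, abs_of_nonneg ht]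
          ring
  have hd1 : (Polynomial.derivative q).natDegree ≤ 1 :=
    natDegree_le_one_of_linear_growth _ _ _ hvbound
  obtain ⟨k, hk⟩ : ∃ k, n = k + 1 := ⟨n - 1, by omega⟩
  have hdc : (Polynomial.derivative q).coeff k ≠ 0 := by
    rw [Polynomial.coeff_derivative, ← hk]
    intro hz
    rcases mul_eq_zero.mp hz with h1 | h1
    · exact hcoeff h1
    · have hne : (n : ℝ) ≠ 0 := Nat.cast_ne_zero.mpr (by omega)
      apply hne
      rw [hk]
      push_cast at h1 ⊢
      linarith
  have := Polynomial.le_natDegree_of_ne_zero hdc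
  omega
end

section
/- Let p : ℝ^d → ℝ be (the evaluation of) a multivariate polynomial whose gradient is globally Lipschitz, i.e. there exists α > 0 with ‖∇p(w₁) − ∇p(w₂)‖ ≤ α‖w₁ − w₂‖ for all w₁, w₂ ∈ ℝ^d. Then p has total degree at most 2. -/
open MvPolynomial

/-- A univariate real polynomial with linear growth has degree at most 1. -/
lemma natDegree_le_one_of_linear_growth_s8 (f : Polynomial ℝ) (C B : ℝ) (hB : 0 ≤ B)
    (h : ∀ t : ℝ, |f.eval t| ≤ C + B * |t|) : f.natDegree ≤ 1 := by
  by_contra hlt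
  push_neg at hlt
  have hC : 0 ≤ C := by have := h 0; simp at this; linarith [abs_nonneg (f.eval 0)]
  have hf0 : f ≠ 0 := by rintro rfl; simp at hlt
  have hdeg : (Polynomial.X : Polynomial ℝ).degree < f.degree := by
    rw [Polynomial.degree_X, Polynomial.degree_eq_natDegree hf0]
    exact_mod_cast hlt
  have htend := Polynomial.abs_div_tendsto_atTop_of_degree_gt f Polynomial.X hdeg
    Polynomial.X_ne_zero
  obtain ⟨t, h3, ht1⟩ :=
    ((htend.eventually_ge_atTop (C + B + 1)).and (Filter.eventually_ge_atTop 1)).exists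
  have ht0 : (0:ℝ) < t := lt_of_lt_of_le one_pos ht1
  rw [Polynomial.eval_X, abs_div] at h3
  have habs : |t| = t := abs_of_pos ht0
  have hb : |f.eval t| ≤ (C + B) * t := by
    calc |f.eval t| ≤ C + B * |t| := h t
      _ ≤ (C + B) * t := by rw [habs]; nlinarith
  rw [habs] at h3
  have := (div_le_div_iff_of_pos_right ht0).mpr hb
  rw [mul_div_assoc, div_self ht0.ne', mul_one] at this
  linarith

/-- Auxiliary: evaluating the restriction of `q` to a line. -/
lemma eval_line {d : ℕ} (q : MvPolynomial (Fin d) ℝ) (v : Fin d → ℝ) (t : ℝ) :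
    Polynomial.eval t (MvPolynomial.aeval (fun j => Polynomial.C (v j) * Polynomial.X) q)
      = MvPolynomial.eval (fun j => t * v j) q := by
  induction q using MvPolynomial.induction_on with
  | C a => simp
  | add p q hp hq => simp [hp, hq]
  | mul_X p i hp =>
    simp only [map_mul, MvPolynomial.aeval_X, Polynomial.eval_mul, Polynomial.eval_C,
      Polynomial.eval_X, hp, MvPolynomial.eval_mul, MvPolynomial.eval_X]
    ring

/-- Coefficients of the line restriction are evaluations of homogeneous components. -/
lemma coeff_line {d : ℕ} (q : MvPolynomial (Fin d) ℝ) (v : Fin d → ℝ) (n : ℕ) :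
    (MvPolynomial.aeval (fun j => Polynomial.C (v j) * Polynomial.X) q).coeff n
      = MvPolynomial.eval v (MvPolynomial.homogeneousComponent n q) := by
  induction q using MvPolynomial.induction_on' with
  | add p q hp hq => simp [map_add, hp, hq, Polynomial.coeff_add]
  | monomial m c =>
    have hcomp : MvPolynomial.homogeneousComponent n (monomial m c)
        = if m.degree = n then monomial m c else 0 := by
      ext e
      rw [coeff_homogeneousComponent]
      by_cases hem : m = e
      · subst hem; split_ifs <;> simp_all [coeff_monomial]
      · split_ifs <;> simp_all [coeff_monomial, Ne.symm hem]
    have hLHS : (MvPolynomial.aeval (fun j => Polynomial.C (v j) * Polynomial.X)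
          (monomial m c) : Polynomial ℝ)
        = Polynomial.C (c * ∏ j ∈ m.support, v j ^ m j) * Polynomial.X ^ m.degree := by
      rw [MvPolynomial.aeval_monomial]
      rw [Finsupp.prod]
      have : ∏ j ∈ m.support, (Polynomial.C (v j) * Polynomial.X) ^ m j
          = Polynomial.C (∏ j ∈ m.support, v j ^ m j) * Polynomial.X ^ m.degree := by
        rw [Finsupp.degree]
        simp only [mul_pow, ← Polynomial.C_pow]
        rw [Finset.prod_mul_distrib, map_prod, Finset.prod_pow_eq_pow_sum]
        rfl
      rw [this, Polynomial.algebraMap_eq, ← mul_assoc, ← Polynomial.C_mul]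
    rw [hLHS, Polynomial.coeff_C_mul, Polynomial.coeff_X_pow, hcomp]
    by_cases hd : m.degree = n
    · rw [if_pos hd.symm, if_pos hd, mul_one]
      simp [MvPolynomial.eval_monomial, Finsupp.prod]
    · rw [if_neg (fun h => hd h.symm), if_neg hd, mul_zero, map_zero]

/-- Algebraic chain rule for restriction to a line. -/
lemma derivative_line {d : ℕ} (q : MvPolynomial (Fin d) ℝ) (v : Fin d → ℝ) :
    Polynomial.derivative
        (MvPolynomial.aeval (fun j => Polynomial.C (v j) * Polynomial.X) q)
      = ∑ j, Polynomial.C (v j) *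
          MvPolynomial.aeval (fun j => Polynomial.C (v j) * Polynomial.X)
            (MvPolynomial.pderiv j q) := by
  induction q using MvPolynomial.induction_on with
  | C a => simp
  | add p q hp hq => simp [map_add, hp, hq, mul_add, Finset.sum_add_distrib]
  | mul_X p i hp =>
    have hXi : ∀ x : Fin d, (MvPolynomial.pderiv x (MvPolynomial.X i : MvPolynomial (Fin d) ℝ))
        = if x = i then 1 else 0 := by
      intro x
      by_cases hx : x = i
      · subst hx; simp
      · simp [MvPolynomial.pderiv_X_of_ne (Ne.symm hx), hx]
    simp only [map_mul, MvPolynomial.aeval_X, Polynomial.derivative_mul, hp,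
      MvPolynomial.pderiv_mul, hXi, map_add, mul_add, Finset.sum_add_distrib,
      Polynomial.derivative_C, Polynomial.derivative_X, zero_mul, mul_one, zero_add]
    congr 1
    · rw [Finset.sum_mul]
      exact Finset.sum_congr rfl fun j _ => by ring
    · rw [Finset.sum_eq_single i]
      · simp; ring
      · intro b _ hb; simp [hb]
      · simp

lemma euclidean_coord_le_norm {d : ℕ} (w : EuclideanSpace ℝ (Fin d)) (i : Fin d) :
    |w i| ≤ ‖w‖ := by
  calc |w i| = Real.sqrt (‖w i‖ ^ 2) := by
        rw [Real.sqrt_sq (norm_nonneg _)]; exact (Real.norm_eq_abs _).symm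
    _ ≤ Real.sqrt (∑ j, ‖w j‖ ^ 2) := Real.sqrt_le_sqrt
        (Finset.single_le_sum (f := fun j => ‖w j‖ ^ 2) (fun j _ => sq_nonneg _)
          (Finset.mem_univ i))
    _ = ‖w‖ := (EuclideanSpace.norm_eq w).symm

/-- if the gradient of a multivariate polynomial is globally Lipschitz,
i.e. `‖∇p(w₁) − ∇p(w₂)‖ ≤ α‖w₁ − w₂‖` for all `w₁, w₂` and some `α > 0`, then `p`
has total degree at most `2`. -/
theorem polynomial_totalDegree_le_two_of_gradient_lipschitz
    (d : ℕ) (p : MvPolynomial (Fin d) ℝ)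
    (h : ∃ α : ℝ, 0 < α ∧ ∀ w₁ w₂ : EuclideanSpace ℝ (Fin d),
      ‖polyGradient p w₁ - polyGradient p w₂‖ ≤ α * ‖w₁ - w₂‖) :
    p.totalDegree ≤ 2 := by
  obtain ⟨α, hα, hlip⟩ := h
  -- every homogeneous component of degree ≥ 3 vanishes
  have hcomp : ∀ n : ℕ, 3 ≤ n → MvPolynomial.homogeneousComponent n p = 0 := by
    intro n hn
    have heval : ∀ v : Fin d → ℝ,
        MvPolynomial.eval v (MvPolynomial.homogeneousComponent n p) = 0 := by
      intro v
      set V : EuclideanSpace ℝ (Fin d) := WithLp.toLp 2 (fun j => v j) with hV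
      set f : Polynomial ℝ :=
        MvPolynomial.aeval (fun j => Polynomial.C (v j) * Polynomial.X) p with hf
      set C : ℝ := ∑ j, |v j| * |polyGradient p 0 j| with hC
      set B : ℝ := (∑ j, |v j|) * (α * ‖V‖) with hB
      have hB0 : 0 ≤ B := by
        apply mul_nonneg (Finset.sum_nonneg fun j _ => abs_nonneg _)
        positivity
      -- the derivative of the line restriction has linear growth
      have hgrow : ∀ t : ℝ, |(Polynomial.derivative f).eval t| ≤ C + B * |t| := by
        intro t
        have hWt : (fun k => t * v k) = (fun k => (t • V) k) := by
          funext k; simp [hV, smul_eq_mul]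
        have hgrad : ∀ j : Fin d,
            |polyGradient p (t • V) j| ≤ |polyGradient p 0 j| + α * ‖V‖ * |t| := by
          intro j
          have h1 : |polyGradient p (t • V) j - polyGradient p 0 j|
              ≤ α * (|t| * ‖V‖) := by
            calc |polyGradient p (t • V) j - polyGradient p 0 j|
                = |(polyGradient p (t • V) - polyGradient p 0) j| := by
                  congr 1
              _ ≤ ‖polyGradient p (t • V) - polyGradient p 0‖ :=
                  euclidean_coord_le_norm _ j
              _ ≤ α * ‖t • V - 0‖ := hlip _ _
              _ = α * (|t| * ‖V‖) := by rw [sub_zero, norm_smul, Real.norm_eq_abs]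
          have := abs_sub_abs_le_abs_sub (polyGradient p (t • V) j) (polyGradient p 0 j)
          nlinarith [abs_nonneg (polyGradient p 0 j)]
        have heval' : (Polynomial.derivative f).eval t
            = ∑ j, v j * polyGradient p (t • V) j := by
          rw [hf, derivative_line]
          rw [Polynomial.eval_finset_sum]
          refine Finset.sum_congr rfl fun j _ => ?_
          rw [Polynomial.eval_mul, Polynomial.eval_C, eval_line, hWt]
          rfl
        rw [heval']
        calc |∑ j, v j * polyGradient p (t • V) j|
            ≤ ∑ j, |v j * polyGradient p (t • V) j| := Finset.abs_sum_le_sum_abs _ _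
          _ ≤ ∑ j, |v j| * (|polyGradient p 0 j| + α * ‖V‖ * |t|) := by
              refine Finset.sum_le_sum fun j _ => ?_
              rw [abs_mul]
              exact mul_le_mul_of_nonneg_left (hgrad j) (abs_nonneg _)
          _ = C + B * |t| := by
              simp only [mul_add, Finset.sum_add_distrib, hC, hB]
              congr 1
              rw [Finset.sum_mul, Finset.sum_mul]
              refine Finset.sum_congr rfl fun j _ => by ring
      have hdeg1 : (Polynomial.derivative f).natDegree ≤ 1 :=
        natDegree_le_one_of_linear_growth_s8 _ C B hB0 hgrow
      have hcoeff0 : (Polynomial.derivative f).coeff (n - 1) = 0 := by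
        apply Polynomial.coeff_eq_zero_of_natDegree_lt
        omega
      rw [Polynomial.coeff_derivative] at hcoeff0
      have hn1 : n - 1 + 1 = n := by omega
      rw [hn1] at hcoeff0
      have hfn : f.coeff n = 0 := by
        have : ((n - 1 : ℕ) : ℝ) + 1 ≠ 0 := by positivity
        rcases mul_eq_zero.mp hcoeff0 with h' | h'
        · exact h'
        · exact absurd h' this
      rw [hf, coeff_line] at hfn
      exact hfn
    have := MvPolynomial.funext (p := MvPolynomial.homogeneousComponent n p) (q := 0)
      (fun x => by rw [heval x, map_zero])
    exact this
  -- conclude on the total degree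
  by_contra hdeg
  push_neg at hdeg
  have hp0 : p ≠ 0 := by rintro rfl; simp at hdeg
  obtain ⟨m, hm, hmd⟩ := Finset.exists_mem_eq_sup p.support
    (Finset.nonempty_iff_ne_empty.mpr (mt MvPolynomial.support_eq_empty.mp hp0)) (fun m : Fin d →₀ ℕ => m.sum fun _ e => e)
  have hmdeg : m.degree = p.totalDegree := by
    rw [MvPolynomial.totalDegree, hmd]; rfl
  have h0 : MvPolynomial.homogeneousComponent p.totalDegree p = 0 := hcomp _ (by omega)
  have : MvPolynomial.coeff m (MvPolynomial.homogeneousComponent p.totalDegree p)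
      = MvPolynomial.coeff m p := by
    rw [coeff_homogeneousComponent, if_pos hmdeg]
  rw [h0] at this
  simp only [MvPolynomial.coeff_zero] at this
  exact (MvPolynomial.mem_support_iff.mp hm) this.symm
end

section
/- Let L : ℝ^d → ℝ be twice continuously differentiable, let w₀ satisfy ∇L(w₀) = 0, and suppose the Hessian H = D²L(w₀) is positive definite. Then there exists an open neighbourhood W of w₀ such that lim_{ε → 0⁺} ε^{−d/2} · vol{w ∈ W : L(w) ≤ L(w₀) + ε} = 2^{d/2} (det H)^{−1/2} ω_d, where vol denotes d-dimensional Lebesgue measure and ω_d is the Lebesgue volume of the Euclidean unit ball in ℝ^d. -/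
open MeasureTheory Filter
open Metric Matrix

set_option maxHeartbeats 1000000

open scoped MatrixOrder in
noncomputable def Matrix.PosSemidef.sqrt {d : ℕ} {A : Matrix (Fin d) (Fin d) ℝ}
    (_hA : A.PosSemidef) : Matrix (Fin d) (Fin d) ℝ := CFC.sqrt A

open scoped MatrixOrder in
lemma Matrix.PosSemidef.posSemidef_sqrt {d : ℕ} {A : Matrix (Fin d) (Fin d) ℝ}
    (hA : A.PosSemidef) : hA.sqrt.PosSemidef := (CFC.sqrt_nonneg A).posSemidef

open scoped MatrixOrder in
lemma Matrix.PosSemidef.sq_sqrt {d : ℕ} {A : Matrix (Fin d) (Fin d) ℝ}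
    (hA : A.PosSemidef) : hA.sqrt ^ 2 = A := CFC.sq_sqrt A hA.nonneg

open scoped MatrixOrder in
lemma Matrix.PosSemidef.sqrt_mul_self {d : ℕ} {A : Matrix (Fin d) (Fin d) ℝ}
    (hA : A.PosSemidef) : hA.sqrt * hA.sqrt = A := CFC.sqrt_mul_sqrt_self A hA.nonneg


-- norm squared on EuclideanSpace as dot product
lemma norm_sq_eq_dot {d : ℕ} (v : EuclideanSpace ℝ (Fin d)) : ‖v‖ ^ 2 = v ⬝ᵥ v := by
  rw [EuclideanSpace.norm_eq, Real.sq_sqrt (by positivity)]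
  simp [dotProduct, sq, Real.norm_eq_abs, abs_mul_abs_self]

-- quadratic form via sqrt
lemma quad_eq_norm_sq {d : ℕ} {N : Matrix (Fin d) (Fin d) ℝ} (hN : N.PosDef)
    (v : EuclideanSpace ℝ (Fin d)) :
    v ⬝ᵥ N *ᵥ v = ‖Matrix.toEuclideanLin hN.posSemidef.sqrt v‖ ^ 2 := by
  set R := hN.posSemidef.sqrt with hR
  have hRH : Rᵀ = R := hN.posSemidef.posSemidef_sqrt.isHermitian
  have h1 : (Matrix.toEuclideanLin R v : Fin d → ℝ) = R *ᵥ v := rfl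
  rw [norm_sq_eq_dot]
  show v ⬝ᵥ N *ᵥ v = (R *ᵥ v) ⬝ᵥ (R *ᵥ v)
  rw [dotProduct_mulVec (R *ᵥ v) R v, ← mulVec_transpose, hRH, mulVec_mulVec,
    hN.posSemidef.sqrt_mul_self, dotProduct_comm]

lemma posSemidef_det_nonneg {d : ℕ} {A : Matrix (Fin d) (Fin d) ℝ} (hA : A.PosSemidef) :
    0 ≤ A.det := by
  rw [hA.isHermitian.det_eq_prod_eigenvalues]
  exact Finset.prod_nonneg fun i _ => by simpa using hA.eigenvalues_nonneg i

lemma sqrt_det_sq {d : ℕ} {N : Matrix (Fin d) (Fin d) ℝ} (hN : N.PosDef) :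
    hN.posSemidef.sqrt.det ^ 2 = N.det ∧ 0 < hN.posSemidef.sqrt.det := by
  have h1 : hN.posSemidef.sqrt.det ^ 2 = N.det := by
    rw [← Matrix.det_pow, hN.posSemidef.sq_sqrt]
  have h2 : 0 ≤ hN.posSemidef.sqrt.det := posSemidef_det_nonneg hN.posSemidef.posSemidef_sqrt
  refine ⟨h1, lt_of_le_of_ne h2 ?_⟩
  intro h
  have := hN.det_pos
  rw [← h1, ← h, zero_pow (by norm_num)] at this
  exact lt_irrefl _ this

lemma det_toEuclideanLin {d : ℕ} (R : Matrix (Fin d) (Fin d) ℝ) :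
    LinearMap.det (Matrix.toEuclideanLin R) = R.det := by
  rw [Matrix.toEuclideanLin_eq_toLin, LinearMap.det_toLin]

-- ellipsoid volume
lemma ellipsoid_volume {d : ℕ} {N : Matrix (Fin d) (Fin d) ℝ} (hN : N.PosDef)
    {s : ℝ} (hs : 0 < s) :
    volume {v : EuclideanSpace ℝ (Fin d) | v ⬝ᵥ N *ᵥ v ≤ s}
      = ENNReal.ofReal (s ^ ((d : ℝ) / 2) * N.det ^ (-(1:ℝ) / 2))
        * volume (ball (0 : EuclideanSpace ℝ (Fin d)) 1) := by
  set R := hN.posSemidef.sqrt with hR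
  obtain ⟨hdet, hdpos⟩ := sqrt_det_sq hN
  have hdet' : LinearMap.det (Matrix.toEuclideanLin R) ≠ 0 := by
    rw [det_toEuclideanLin]; exact hdpos.ne'
  have hset : {v : EuclideanSpace ℝ (Fin d) | v ⬝ᵥ N *ᵥ v ≤ s}
      = (Matrix.toEuclideanLin R) ⁻¹' (closedBall 0 (Real.sqrt s)) := by
    ext v
    simp only [Set.mem_setOf_eq, Set.mem_preimage, mem_closedBall, dist_zero_right]
    rw [quad_eq_norm_sq hN, ← hR]
    constructor
    · intro h
      exact (Real.le_sqrt (norm_nonneg _) hs.le).mpr h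
    · intro h
      exact (Real.le_sqrt (norm_nonneg _) hs.le).mp h
  rw [hset, Measure.addHaar_preimage_linearMap volume hdet',
    Measure.addHaar_closedBall volume 0 (Real.sqrt_nonneg s), det_toEuclideanLin,
    finrank_euclideanSpace_fin]
  rw [← mul_assoc, ← ENNReal.ofReal_mul (by positivity)]
  congr 2
  have h1 : Real.sqrt s ^ d = s ^ ((d : ℝ) / 2) := by
    rw [Real.sqrt_eq_rpow, ← Real.rpow_natCast (s ^ ((1:ℝ)/2)) d, ← Real.rpow_mul hs.le]
    ring_nf
  have h2 : |R.det⁻¹| = N.det ^ (-(1:ℝ) / 2) := by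
    rw [abs_of_nonneg (by positivity)]
    rw [← hdet, neg_div, Real.rpow_neg (by positivity)]
    rw [show ((1:ℝ)/2) = (2:ℝ)⁻¹ by norm_num, ← Real.rpow_natCast (R.det) 2,
      ← Real.rpow_mul (by positivity)]
    norm_num
  rw [h1, h2, mul_comm]

lemma posdef_coercive {d : ℕ} {N : Matrix (Fin d) (Fin d) ℝ} (hN : N.PosDef) :
    ∃ c > 0, ∀ v : EuclideanSpace ℝ (Fin d), c * ‖v‖ ^ 2 ≤ v ⬝ᵥ N *ᵥ v := by
  set R := hN.posSemidef.sqrt with hR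
  obtain ⟨hdetsq, hdpos⟩ := sqrt_det_sq hN
  have hdet : R.det ≠ 0 := hdpos.ne'
  set T : EuclideanSpace ℝ (Fin d) →L[ℝ] EuclideanSpace ℝ (Fin d) :=
    LinearMap.toContinuousLinearMap (Matrix.toEuclideanLin R⁻¹)
  set C := max ‖T‖ 1 with hC
  have hCpos : 0 < C := lt_of_lt_of_le one_pos (le_max_right _ _)
  refine ⟨C⁻¹ ^ 2, by positivity, fun v => ?_⟩
  have hinv : T (Matrix.toEuclideanLin R v) = v := by
    ext i
    show (R⁻¹ *ᵥ (R *ᵥ v)) i = v i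
    rw [mulVec_mulVec, Matrix.nonsing_inv_mul R hdet.isUnit, one_mulVec]
  have hnorm : ‖v‖ ≤ C * ‖Matrix.toEuclideanLin R v‖ := by
    calc ‖v‖ = ‖T (Matrix.toEuclideanLin R v)‖ := by rw [hinv]
    _ ≤ ‖T‖ * ‖Matrix.toEuclideanLin R v‖ := T.le_opNorm _
    _ ≤ C * ‖Matrix.toEuclideanLin R v‖ :=
        mul_le_mul_of_nonneg_right (le_max_left _ _) (norm_nonneg _)
  rw [quad_eq_norm_sq hN v, ← hR]
  have h4 : 0 ≤ ‖Matrix.toEuclideanLin R v‖ := norm_nonneg _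
  have h5 : C⁻¹ * ‖v‖ ≤ ‖Matrix.toEuclideanLin R v‖ := by
    rw [inv_mul_le_iff₀ hCpos]
    linarith [hnorm]
  nlinarith [norm_nonneg v, mul_le_mul h5 h5 (by positivity) h4]

lemma taylor_second_order {d : ℕ} {L : EuclideanSpace ℝ (Fin d) → ℝ}
    (hC2 : ContDiff ℝ 2 L) {w0 : EuclideanSpace ℝ (Fin d)}
    (hcrit : fderiv ℝ L w0 = 0) {δ : ℝ} (hδ : 0 < δ) :
    ∃ r > 0, ∀ v : EuclideanSpace ℝ (Fin d), ‖v‖ ≤ r →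
      |L (w0 + v) - L w0 - (1/2) * fderiv ℝ (fderiv ℝ L) w0 v v| ≤ δ * ‖v‖ ^ 2 := by
  set f'' := fderiv ℝ (fderiv ℝ L) w0 with hf''def
  have hdL : Differentiable ℝ L := hC2.differentiable two_ne_zero
  have hC1 : ContDiff ℝ 1 (fderiv ℝ L) := hC2.fderiv_right (le_refl _)
  have hdL' : Differentiable ℝ (fderiv ℝ L) := hC1.differentiable one_ne_zero
  have hf'' : HasFDerivAt (fderiv ℝ L) f'' w0 := (hdL' w0).hasFDerivAt
  have hsymm : ∀ a b, f'' a b = f'' b a :=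
    second_derivative_symmetric (fun y => (hdL y).hasFDerivAt) hf''
  -- little-o estimate
  have hlittle := (hasFDerivAt_iff_isLittleO_nhds_zero.mp hf'').def hδ
  rw [Metric.eventually_nhds_iff] at hlittle
  obtain ⟨ρ, hρ, hball⟩ := hlittle
  refine ⟨ρ / 2, by positivity, fun v hv => ?_⟩
  -- derivative of the auxiliary function
  have hg : ∀ u : EuclideanSpace ℝ (Fin d),
      HasFDerivAt (fun u => L (w0 + u) - (1/2) * f'' u u)
        (fderiv ℝ L (w0 + u) - f'' u) u := by
    intro u
    have h1 : HasFDerivAt (fun u : EuclideanSpace ℝ (Fin d) => L (w0 + u))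
        (fderiv ℝ L (w0 + u)) u := by
      have := (hdL (w0 + u)).hasFDerivAt.comp u
        ((hasFDerivAt_id u).const_add w0)
      simpa [Function.comp_def] using this
    have hbil : IsBoundedBilinearMap ℝ
        (fun p : EuclideanSpace ℝ (Fin d) × EuclideanSpace ℝ (Fin d) => f'' p.1 p.2) :=
      f''.isBoundedBilinearMap
    have h3 : HasFDerivAt (fun u : EuclideanSpace ℝ (Fin d) => (1/2) * f'' u u)
        (f'' u) u := by
      have hdiag : HasFDerivAt (fun x : EuclideanSpace ℝ (Fin d) => (x, x))
          ((ContinuousLinearMap.id ℝ _).prod (ContinuousLinearMap.id ℝ _)) u :=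
        (hasFDerivAt_id u).prodMk (hasFDerivAt_id u)
      have h2' := HasFDerivAt.comp (f := fun x : EuclideanSpace ℝ (Fin d) => (x, x)) u
        (hbil.hasFDerivAt (u, u)) hdiag
      have h2'' := h2'.const_smul (1/2 : ℝ)
      refine (h2''.congr_of_eventuallyEq (Filter.Eventually.of_forall fun x => ?_)).congr_fderiv ?_
      · rfl
      ext w
      simp only [ContinuousLinearMap.smul_apply, ContinuousLinearMap.comp_apply,
        ContinuousLinearMap.prod_apply, ContinuousLinearMap.coe_id', id_eq,
        IsBoundedBilinearMap.deriv_apply, smul_eq_mul]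
      rw [hsymm w u]; ring
    exact h1.sub h3
  -- mean value inequality on the segment (closed ball of radius ‖v‖)
  have hconv : Convex ℝ (Metric.closedBall (0 : EuclideanSpace ℝ (Fin d)) ‖v‖) :=
    convex_closedBall _ _
  have hbound : ∀ u ∈ Metric.closedBall (0 : EuclideanSpace ℝ (Fin d)) ‖v‖,
      ‖fderiv ℝ L (w0 + u) - f'' u‖ ≤ δ * ‖v‖ := by
    intro u hu
    rw [Metric.mem_closedBall, dist_zero_right] at hu
    have hdist : dist u 0 < ρ := by
      rw [dist_zero_right]
      calc ‖u‖ ≤ ‖v‖ := hu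
      _ ≤ ρ / 2 := hv
      _ < ρ := by linarith
    have := hball hdist
    rw [hcrit] at this
    simp only [ContinuousLinearMap.zero_apply, sub_zero] at this
    calc ‖fderiv ℝ L (w0 + u) - f'' u‖ ≤ δ * ‖u‖ := by simpa using this
    _ ≤ δ * ‖v‖ := by nlinarith [hu, norm_nonneg u]
  have hmv := hconv.norm_image_sub_le_of_norm_hasFDerivWithin_le
    (fun u _ => (hg u).hasFDerivWithinAt) hbound
    (show (0 : EuclideanSpace ℝ (Fin d)) ∈ Metric.closedBall 0 ‖v‖ by
      simp [Metric.mem_closedBall])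
    (show v ∈ Metric.closedBall (0 : EuclideanSpace ℝ (Fin d)) ‖v‖ by
      simp [Metric.mem_closedBall])
  have heq : L (w0 + v) - L w0 - 1/2 * f'' v v
      = (fun u => L (w0 + u) - 1/2 * f'' u u) v
        - (fun u => L (w0 + u) - 1/2 * f'' u u) 0 := by
    simp; ring
  rw [show |L (w0 + v) - L w0 - 1/2 * f'' v v|
      = ‖(fun u => L (w0 + u) - 1/2 * f'' u u) v
        - (fun u => L (w0 + u) - 1/2 * f'' u u) 0‖ by rw [Real.norm_eq_abs, ← heq]]
  calc _ ≤ δ * ‖v‖ * ‖v - 0‖ := hmv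
  _ = δ * ‖v‖ ^ 2 := by rw [sub_zero]; ring

-- expansion of a continuous bilinear form in coordinates
lemma bilin_eq_dot {d : ℕ} (B : EuclideanSpace ℝ (Fin d) →L[ℝ] EuclideanSpace ℝ (Fin d) →L[ℝ] ℝ)
    (v : EuclideanSpace ℝ (Fin d)) :
    B v v = v ⬝ᵥ (Matrix.of fun i j => B (EuclideanSpace.single i 1)
      (EuclideanSpace.single j 1)) *ᵥ v := by
  have hrepr : ∀ u : EuclideanSpace ℝ (Fin d), u = ∑ i, u i • EuclideanSpace.single i (1:ℝ) := by
    intro u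
    ext j
    simp [EuclideanSpace.single_apply, Pi.single_apply]
  have key : ∀ u w : EuclideanSpace ℝ (Fin d), B u w
      = ∑ i, ∑ j, u i * w j * B (EuclideanSpace.single i 1) (EuclideanSpace.single j 1) := by
    intro u w
    nth_rewrite 1 [hrepr u]
    rw [map_sum, ContinuousLinearMap.sum_apply]
    refine Finset.sum_congr rfl fun i _ => ?_
    rw [_root_.map_smul, ContinuousLinearMap.smul_apply]
    nth_rewrite 1 [hrepr w]
    rw [map_sum, Finset.smul_sum]
    refine Finset.sum_congr rfl fun j _ => ?_
    rw [_root_.map_smul]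
    simp only [smul_eq_mul]
    ring
  rw [key]
  rw [dotProduct]
  refine Finset.sum_congr rfl fun i _ => ?_
  rw [Matrix.mulVec, dotProduct, Finset.mul_sum]
  refine Finset.sum_congr rfl fun j _ => ?_
  simp only [Matrix.of_apply]
  ring

lemma quad_perturb {d : ℕ} (M : Matrix (Fin d) (Fin d) ℝ) (t : ℝ)
    (v : EuclideanSpace ℝ (Fin d)) :
    v ⬝ᵥ (M + t • (1 : Matrix (Fin d) (Fin d) ℝ)) *ᵥ v = v ⬝ᵥ M *ᵥ v + t * ‖v‖ ^ 2 := by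
  rw [Matrix.add_mulVec, dotProduct_add, norm_sq_eq_dot]
  congr 1
  rw [Matrix.smul_mulVec, Matrix.one_mulVec, dotProduct_smul, smul_eq_mul]

lemma det_perturb_continuous {d : ℕ} (M : Matrix (Fin d) (Fin d) ℝ) :
    Continuous fun t : ℝ => (M + t • (1 : Matrix (Fin d) (Fin d) ℝ)).det := by
  simp only [Matrix.det_apply']
  apply continuous_finset_sum
  intro σ _
  apply Continuous.mul continuous_const
  apply continuous_finset_prod
  intro i _
  simp only [Matrix.add_apply, Matrix.smul_apply, Matrix.one_apply, smul_eq_mul]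
  fun_prop

/-- at a non-degenerate critical point `w₀` (vanishing derivative,
positive definite Hessian `H`) of a `C²` function `L : ℝ^d → ℝ`, there is an open
neighbourhood `W` of `w₀` on which the sublevel-set volume satisfies
`ε^{-d/2} · vol{w ∈ W : L w ≤ L w₀ + ε} → 2^{d/2} (det H)^{-1/2} ω_d` as `ε → 0⁺`,
where `ω_d` is the volume of the unit ball in `ℝ^d`. -/
theorem sublevel_volume_scaling_nondegenerate_minimum
    (d : ℕ) (L : EuclideanSpace ℝ (Fin d) → ℝ) (hC2 : ContDiff ℝ 2 L)
    (w0 : EuclideanSpace ℝ (Fin d))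
    (hcrit : fderiv ℝ L w0 = 0)
    (hposdef : ∀ v : EuclideanSpace ℝ (Fin d), v ≠ 0 →
      0 < iteratedFDeriv ℝ 2 L w0 ![v, v]) :
    ∃ W : Set (EuclideanSpace ℝ (Fin d)), IsOpen W ∧ w0 ∈ W ∧
      Tendsto (fun ε : ℝ =>
          ε ^ (-(d : ℝ) / 2) * (volume {w ∈ W | L w ≤ L w0 + ε}).toReal)
        (nhdsWithin 0 (Set.Ioi 0))
        (nhds ((2 : ℝ) ^ ((d : ℝ) / 2)
          * ((Matrix.of fun i j : Fin d => iteratedFDeriv ℝ 2 L w0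
              ![EuclideanSpace.single i 1, EuclideanSpace.single j 1]).det) ^ (-(1 : ℝ) / 2)
          * (volume (Metric.ball (0 : EuclideanSpace ℝ (Fin d)) 1)).toReal)) := by
  classical
  set f'' := fderiv ℝ (fderiv ℝ L) w0 with hf''def
  have hdL : Differentiable ℝ L := hC2.differentiable two_ne_zero
  have hf''at : HasFDerivAt (fderiv ℝ L) f'' w0 :=
    (((hC2.fderiv_right (m := 1) (le_refl _)).differentiable one_ne_zero) w0).hasFDerivAt
  have hsymm : ∀ a b, f'' a b = f'' b a :=
    second_derivative_symmetric (fun y => (hdL y).hasFDerivAt) hf''at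
  have hiter : ∀ a b : EuclideanSpace ℝ (Fin d),
      iteratedFDeriv ℝ 2 L w0 ![a, b] = f'' a b := by
    intro a b
    rw [iteratedFDeriv_two_apply]
    simp [hf''def]
  set M : Matrix (Fin d) (Fin d) ℝ := Matrix.of fun i j =>
    f'' (EuclideanSpace.single i 1) (EuclideanSpace.single j 1) with hMdef
  have hMgoal : (Matrix.of fun i j : Fin d => iteratedFDeriv ℝ 2 L w0
      ![EuclideanSpace.single i 1, EuclideanSpace.single j 1]) = M := by
    ext i j
    simp only [Matrix.of_apply, hMdef]
    exact hiter _ _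
  have hquad : ∀ v : EuclideanSpace ℝ (Fin d), f'' v v = v ⬝ᵥ M *ᵥ v :=
    fun v => bilin_eq_dot f'' v
  have hMposdef : M.PosDef := by
    refine Matrix.PosDef.of_dotProduct_mulVec_pos ?_ fun x hx => ?_
    · ext i j
      simp only [Matrix.conjTranspose_apply, Matrix.of_apply, hMdef, star_trivial]
      exact hsymm _ _
    · have h0 := hposdef (WithLp.toLp 2 x) (by simpa using hx)
      rw [hiter _ _, hquad _] at h0
      simpa using h0
  obtain ⟨cM, hcM, hcoer⟩ := posdef_coercive hMposdef
  set ω := (volume (Metric.ball (0 : EuclideanSpace ℝ (Fin d)) 1)).toReal with hωdef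
  have hωtop : volume (Metric.ball (0 : EuclideanSpace ℝ (Fin d)) 1) ≠ ⊤ :=
    measure_ball_lt_top.ne
  obtain ⟨r0, hr0, hT0⟩ := taylor_second_order hC2 hcrit (show 0 < cM/4 by positivity)
  refine ⟨Metric.ball w0 r0, Metric.isOpen_ball, Metric.mem_ball_self hr0, ?_⟩
  rw [hMgoal]
  set ℓ := (2:ℝ) ^ ((d:ℝ)/2) * M.det ^ (-(1:ℝ)/2) * ω with hℓdef
  have hgrow : ∀ v : EuclideanSpace ℝ (Fin d), ‖v‖ ≤ r0 →
      L w0 + (cM/4) * ‖v‖^2 ≤ L (w0 + v) := by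
    intro v hv
    have h := (abs_le.mp (hT0 v hv)).1
    have h2 := hcoer v
    rw [hquad v] at h
    linarith
  rw [Metric.tendsto_nhds]
  intro η hη
  -- continuity in the perturbation parameter
  have hco : ContinuousAt (fun s : ℝ =>
      (2:ℝ)^((d:ℝ)/2) * ((M + s • 1).det) ^ (-(1:ℝ)/2) * ω) 0 := by
    have h1 : Continuous fun s : ℝ => (M + s • (1 : Matrix (Fin d) (Fin d) ℝ)).det :=
      det_perturb_continuous M
    have h3 : ContinuousAt (fun s : ℝ =>
        ((M + s • (1 : Matrix (Fin d) (Fin d) ℝ)).det) ^ (-(1:ℝ)/2)) 0 := by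
      apply ContinuousAt.rpow_const h1.continuousAt
      left
      simp only [zero_smul, add_zero]
      exact hMposdef.det_pos.ne'
    exact (continuousAt_const.mul h3).mul continuousAt_const
  have hco0 : (fun s : ℝ => (2:ℝ)^((d:ℝ)/2) * ((M + s • 1).det) ^ (-(1:ℝ)/2) * ω) 0 = ℓ := by
    simp [hℓdef]
  have hev : ∀ᶠ s in nhds (0:ℝ),
      dist ((2:ℝ)^((d:ℝ)/2) * ((M + s • 1).det) ^ (-(1:ℝ)/2) * ω) ℓ < η := by
    have h3 : Tendsto (fun s : ℝ => (2:ℝ)^((d:ℝ)/2) * ((M + s • 1).det) ^ (-(1:ℝ)/2) * ω)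
        (nhds 0) (nhds ℓ) := hco0 ▸ hco.tendsto
    exact Metric.tendsto_nhds.mp h3 η hη
  rw [Metric.eventually_nhds_iff] at hev
  obtain ⟨ρ, hρ, hρev⟩ := hev
  set t := min (ρ/2) (cM/2) with htdef
  have htpos : 0 < t := lt_min (by positivity) (by positivity)
  have ht1 : t ≤ cM/2 := min_le_right _ _
  have htρ : ∀ s : ℝ, |s| ≤ t → dist s 0 < ρ := by
    intro s hs
    rw [Real.dist_eq, sub_zero]
    calc |s| ≤ t := hs
    _ ≤ ρ/2 := min_le_left _ _
    _ < ρ := by linarith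
  -- positive definiteness of perturbed matrices
  have hpos : ∀ s : ℝ, |s| ≤ cM/2 → (M + s • (1 : Matrix (Fin d) (Fin d) ℝ)).PosDef := by
    intro s hs
    have herm : (M + s • (1 : Matrix (Fin d) (Fin d) ℝ)).IsHermitian := by
      refine hMposdef.1.add ?_
      show (s • (1 : Matrix (Fin d) (Fin d) ℝ))ᴴ = _
      rw [Matrix.conjTranspose_smul, Matrix.conjTranspose_one, star_trivial]
    have hq : ∀ v : EuclideanSpace ℝ (Fin d), v ≠ 0 →
        0 < v ⬝ᵥ (M + s • (1 : Matrix (Fin d) (Fin d) ℝ)) *ᵥ v := by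
      intro v hv
      have h1 := hcoer v
      have h3 : 0 < ‖v‖ := norm_pos_iff.mpr hv
      rw [quad_perturb]
      have h4 := abs_le.mp hs
      nlinarith [mul_le_mul_of_nonneg_right h4.1 (sq_nonneg ‖v‖),
        mul_pos hcM (pow_pos h3 2)]
    exact Matrix.PosDef.of_dotProduct_mulVec_pos herm fun x hx => by simpa using hq (WithLp.toLp 2 x) (by simpa using hx)
  have hposT : (M + t • (1 : Matrix (Fin d) (Fin d) ℝ)).PosDef :=
    hpos t (by rw [abs_of_pos htpos]; exact ht1)
  have hposT' : (M + (-t) • (1 : Matrix (Fin d) (Fin d) ℝ)).PosDef :=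
    hpos (-t) (by rw [abs_neg, abs_of_pos htpos]; exact ht1)
  -- Taylor with precision t/2
  obtain ⟨r1, hr1, hT1⟩ := taylor_second_order hC2 hcrit (show 0 < t/2 by positivity)
  set r2 := min r1 (r0/2) with hr2def
  have hr2pos : 0 < r2 := lt_min hr1 (by positivity)
  have hr2r1 : r2 ≤ r1 := min_le_left _ _
  have hr2r0 : r2 ≤ r0/2 := min_le_right _ _
  set ε0 := cM * r2^2 / 4 with hε0def
  have hε0pos : 0 < ε0 := by positivity
  have hIoo : Set.Ioo (0:ℝ) ε0 ∈ nhdsWithin (0:ℝ) (Set.Ioi 0) :=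
    Ioo_mem_nhdsGT_of_mem ⟨le_refl 0, hε0pos⟩
  filter_upwards [hIoo] with ε hε
  obtain ⟨hεpos, hεlt⟩ := hε
  set A := {w ∈ Metric.ball w0 r0 | L w ≤ L w0 + ε} with hAdef
  -- upper inclusion
  have key_ub : A ⊆ (fun w => w - w0) ⁻¹'
      {v : EuclideanSpace ℝ (Fin d) | v ⬝ᵥ (M + (-t) • 1) *ᵥ v ≤ 2*ε} := by
    rintro w ⟨hwW, hwL⟩
    set v := w - w0 with hvdef
    have hwv : w0 + v = w := by rw [hvdef, add_comm, sub_add_cancel]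
    have hvr0 : ‖v‖ < r0 := by
      rw [hvdef, ← dist_eq_norm]
      exact Metric.mem_ball.mp hwW
    have hvsq : ‖v‖^2 < r2^2 := by
      have h5 := hgrow v hvr0.le
      rw [hwv] at h5
      nlinarith
    have hsmall : ‖v‖ ≤ r2 := (lt_of_pow_lt_pow_left₀ 2 hr2pos.le hvsq).le
    have hT := (abs_le.mp (hT1 v (hsmall.trans hr2r1))).1
    rw [hquad v, hwv] at hT
    show v ⬝ᵥ (M + (-t) • 1) *ᵥ v ≤ 2*ε
    rw [quad_perturb]
    linarith
  -- lower inclusion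
  have key_lb : (fun w => w - w0) ⁻¹'
      {v : EuclideanSpace ℝ (Fin d) | v ⬝ᵥ (M + t • 1) *ᵥ v ≤ 2*ε} ⊆ A := by
    intro w hw
    set v := w - w0 with hvdef
    have hwv : w0 + v = w := by rw [hvdef, add_comm, sub_add_cancel]
    have hq : v ⬝ᵥ M *ᵥ v + t * ‖v‖^2 ≤ 2*ε := by
      rw [← quad_perturb]
      exact hw
    have h1 := hcoer v
    have hvsq : ‖v‖^2 < r2^2 := by
      nlinarith [mul_nonneg htpos.le (sq_nonneg ‖v‖), mul_pos hcM (pow_pos hr2pos 2)]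
    have hsmall : ‖v‖ ≤ r2 := (lt_of_pow_lt_pow_left₀ 2 hr2pos.le hvsq).le
    constructor
    · rw [Metric.mem_ball, dist_eq_norm, ← hvdef]
      calc ‖v‖ ≤ r2 := hsmall
      _ ≤ r0/2 := hr2r0
      _ < r0 := by linarith
    · have hT := (abs_le.mp (hT1 v (hsmall.trans hr2r1))).2
      rw [hquad v, hwv] at hT
      linarith
  -- volumes
  have hpre : ∀ s : Set (EuclideanSpace ℝ (Fin d)),
      volume ((fun w => w - w0) ⁻¹' s) = volume s := by
    intro s
    have heq : (fun w : EuclideanSpace ℝ (Fin d) => w - w0) = fun w => w + (-w0) :=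
      funext fun w => sub_eq_add_neg w w0
    rw [heq, measure_preimage_add_right]
  have hvolU : volume A ≤ ENNReal.ofReal ((2*ε) ^ ((d:ℝ)/2)
      * (M + (-t) • (1 : Matrix (Fin d) (Fin d) ℝ)).det ^ (-(1:ℝ)/2))
      * volume (Metric.ball (0 : EuclideanSpace ℝ (Fin d)) 1) := by
    calc volume A ≤ volume ((fun w => w - w0) ⁻¹'
        {v : EuclideanSpace ℝ (Fin d) | v ⬝ᵥ (M + (-t) • 1) *ᵥ v ≤ 2*ε}) :=
          measure_mono key_ub
    _ = volume {v : EuclideanSpace ℝ (Fin d) | v ⬝ᵥ (M + (-t) • 1) *ᵥ v ≤ 2*ε} := hpre _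
    _ = _ := ellipsoid_volume hposT' (show (0:ℝ) < 2*ε by linarith)
  have hvolL : ENNReal.ofReal ((2*ε) ^ ((d:ℝ)/2)
      * (M + t • (1 : Matrix (Fin d) (Fin d) ℝ)).det ^ (-(1:ℝ)/2))
      * volume (Metric.ball (0 : EuclideanSpace ℝ (Fin d)) 1) ≤ volume A := by
    calc ENNReal.ofReal ((2*ε) ^ ((d:ℝ)/2)
        * (M + t • (1 : Matrix (Fin d) (Fin d) ℝ)).det ^ (-(1:ℝ)/2))
        * volume (Metric.ball (0 : EuclideanSpace ℝ (Fin d)) 1)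
        = volume {v : EuclideanSpace ℝ (Fin d) | v ⬝ᵥ (M + t • 1) *ᵥ v ≤ 2*ε} :=
          (ellipsoid_volume hposT (show (0:ℝ) < 2*ε by linarith)).symm
    _ = volume ((fun w => w - w0) ⁻¹'
        {v : EuclideanSpace ℝ (Fin d) | v ⬝ᵥ (M + t • 1) *ᵥ v ≤ 2*ε}) := (hpre _).symm
    _ ≤ volume A := measure_mono key_lb
  have hfinU : ENNReal.ofReal ((2*ε) ^ ((d:ℝ)/2)
      * (M + (-t) • (1 : Matrix (Fin d) (Fin d) ℝ)).det ^ (-(1:ℝ)/2))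
      * volume (Metric.ball (0 : EuclideanSpace ℝ (Fin d)) 1) ≠ ⊤ :=
    ENNReal.mul_ne_top ENNReal.ofReal_ne_top hωtop
  have hAfin : volume A ≠ ⊤ := (lt_of_le_of_lt hvolU hfinU.lt_top).ne
  have hDposU : (0:ℝ) < (M + (-t) • (1 : Matrix (Fin d) (Fin d) ℝ)).det := hposT'.det_pos
  have hDposL : (0:ℝ) < (M + t • (1 : Matrix (Fin d) (Fin d) ℝ)).det := hposT.det_pos
  have htoU : (volume A).toReal ≤ (2*ε) ^ ((d:ℝ)/2)
      * (M + (-t) • (1 : Matrix (Fin d) (Fin d) ℝ)).det ^ (-(1:ℝ)/2) * ω := by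
    have h6 := ENNReal.toReal_mono hfinU hvolU
    rwa [ENNReal.toReal_mul, ENNReal.toReal_ofReal
      (by positivity), ← hωdef] at h6
  have htoL : (2*ε) ^ ((d:ℝ)/2)
      * (M + t • (1 : Matrix (Fin d) (Fin d) ℝ)).det ^ (-(1:ℝ)/2) * ω
      ≤ (volume A).toReal := by
    have h6 := ENNReal.toReal_mono hAfin hvolL
    rwa [ENNReal.toReal_mul, ENNReal.toReal_ofReal (by positivity), ← hωdef] at h6
  -- rescale
  have hsplit : ∀ D : ℝ, ε ^ (-(d:ℝ)/2) * ((2*ε) ^ ((d:ℝ)/2) * D * ω)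
      = (2:ℝ)^((d:ℝ)/2) * D * ω := by
    intro D
    rw [Real.mul_rpow (by norm_num) hεpos.le]
    have hone : ε ^ (-(d:ℝ)/2) * ε ^ ((d:ℝ)/2) = 1 := by
      rw [← Real.rpow_add hεpos, show (-(d:ℝ)/2 + (d:ℝ)/2) = 0 by ring, Real.rpow_zero]
    calc ε ^ (-(d:ℝ)/2) * ((2:ℝ)^((d:ℝ)/2) * ε ^ ((d:ℝ)/2) * D * ω)
        = (ε ^ (-(d:ℝ)/2) * ε ^ ((d:ℝ)/2)) * ((2:ℝ)^((d:ℝ)/2) * D * ω) := by ring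
    _ = (2:ℝ)^((d:ℝ)/2) * D * ω := by rw [hone, one_mul]
  have hεnn : (0:ℝ) ≤ ε ^ (-(d:ℝ)/2) := Real.rpow_nonneg hεpos.le _
  have hfinal_ub : ε ^ (-(d:ℝ)/2) * (volume A).toReal
      ≤ (2:ℝ)^((d:ℝ)/2) * (M + (-t) • (1 : Matrix (Fin d) (Fin d) ℝ)).det ^ (-(1:ℝ)/2) * ω := by
    rw [← hsplit]
    exact mul_le_mul_of_nonneg_left htoU hεnn
  have hfinal_lb : (2:ℝ)^((d:ℝ)/2)
      * (M + t • (1 : Matrix (Fin d) (Fin d) ℝ)).det ^ (-(1:ℝ)/2) * ω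
      ≤ ε ^ (-(d:ℝ)/2) * (volume A).toReal := by
    rw [← hsplit]
    exact mul_le_mul_of_nonneg_left htoL hεnn
  have hb1 := hρev (htρ t (by rw [abs_of_pos htpos]))
  have hb2 := hρev (htρ (-t) (by rw [abs_neg, abs_of_pos htpos]))
  rw [Real.dist_eq] at hb1 hb2 ⊢
  have hb1' := abs_lt.mp hb1
  have hb2' := abs_lt.mp hb2
  rw [abs_lt]
  constructor <;> [linarith [hfinal_lb]; linarith [hfinal_ub]]
end

section
/- Let M ≥ 1 and let Δ_0, Δ_1, …, Δ_M be nonnegative integers. Then there exists a subset Σ ⊆ {0, 1, …, M} with |Σ| ≥ 2 such that, setting ℓ = |Σ| − 1 and Σᶜ = {0, …, M} \ Σ: (1) max{Δ_σ : σ ∈ Σ} < min{Δ_τ : τ ∈ Σᶜ}; (2) Σ_{σ ∈ Σ} Δ_σ ≥ ℓ · max{Δ_σ : σ ∈ Σ}; and (3) Σ_{σ ∈ Σ} Δ_σ < ℓ · max{Δ_τ : τ ∈ Σᶜ}; where conditions (1) and (3) are interpreted as vacuously true when Σᶜ is empty. -/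
/-- for any `M ≥ 1` and nonnegative integers `Δ_0, …, Δ_M`, there is a
subset `Σ ⊆ {0, …, M}` with `|Σ| ≥ 2` such that, with `ℓ = |Σ| − 1`:
(1) `max {Δ_σ : σ ∈ Σ} < min {Δ_τ : τ ∈ Σᶜ}`;
(2) `Σ_{σ ∈ Σ} Δ_σ ≥ ℓ · max {Δ_σ : σ ∈ Σ}`;
(3) `Σ_{σ ∈ Σ} Δ_σ < ℓ · max {Δ_τ : τ ∈ Σᶜ}`;
with (1) and (3) vacuously true when `Σᶜ` is empty. -/
theorem dln_llc_index_set_exists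
    (M : ℕ) (hM : 1 ≤ M) (Δ : Fin (M + 1) → ℕ) :
    ∃ S : Finset (Fin (M + 1)), 2 ≤ S.card ∧
      (∀ σ ∈ S, ∀ τ ∈ Sᶜ, Δ σ < Δ τ) ∧
      (∀ σ ∈ S, (S.card - 1) * Δ σ ≤ ∑ s ∈ S, Δ s) ∧
      (Sᶜ.Nonempty → ∃ τ ∈ Sᶜ, (∑ s ∈ S, Δ s) < (S.card - 1) * Δ τ) := by
  classical
  obtain ⟨π, hπ⟩ : ∃ π : Equiv.Perm (Fin (M+1)), Monotone (Δ ∘ π) :=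
    ⟨Tuple.sort Δ, Tuple.monotone_sort Δ⟩
  -- g i : the i-th smallest value
  set g : ℕ → ℕ := fun i => if h : i < M + 1 then Δ (π ⟨i, h⟩) else 0 with hg
  have hgval : ∀ (i : ℕ) (h : i < M + 1), g i = Δ (π ⟨i, h⟩) := by
    intro i h; simp only [hg, dif_pos h]
  have hgmono : ∀ i j : ℕ, i ≤ j → j < M + 1 → g i ≤ g j := by
    intro i j hij hj
    have hi : i < M + 1 := lt_of_le_of_lt hij hj
    rw [hgval i hi, hgval j hj]
    exact hπ (show (⟨i, hi⟩ : Fin (M+1)) ≤ ⟨j, hj⟩ from hij)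
  -- the prefix set of indices
  have hfilter : ∀ (k : ℕ) (hk : k ≤ M + 1),
      Finset.univ.filter (fun i : Fin (M+1) => (i : ℕ) < k)
        = (Finset.univ : Finset (Fin k)).map (Fin.castLEEmb hk) := by
    intro k hk
    ext i
    simp only [Finset.mem_filter, Finset.mem_univ, true_and, Finset.mem_map,
      Fin.castLEEmb_apply]
    constructor
    · intro h
      exact ⟨⟨(i : ℕ), h⟩, by ext; simp⟩
    · rintro ⟨j, -, rfl⟩
      simp
  have hcardfilter : ∀ (k : ℕ), k ≤ M + 1 →
      (Finset.univ.filter (fun i : Fin (M+1) => (i : ℕ) < k)).card = k := by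
    intro k hk
    rw [hfilter k hk, Finset.card_map]
    simp
  have hsumfilter : ∀ (k : ℕ), k ≤ M + 1 →
      ∑ i ∈ Finset.univ.filter (fun i : Fin (M+1) => (i : ℕ) < k), Δ (π i)
        = ∑ j ∈ Finset.range k, g j := by
    intro k hk
    rw [hfilter k hk, Finset.sum_map]
    rw [← Fin.sum_univ_eq_sum_range (fun j => g j) k]
    apply Finset.sum_congr rfl
    intro j _
    rw [hgval (j : ℕ) (lt_of_lt_of_le j.isLt hk)]
    rfl
  -- Sk k : the set of indices of the k smallest values
  set Sk : ℕ → Finset (Fin (M+1)) :=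
    fun k => Finset.image π (Finset.univ.filter (fun i : Fin (M+1) => (i : ℕ) < k))
    with hSk
  have hScard : ∀ k, k ≤ M + 1 → (Sk k).card = k := by
    intro k hk
    rw [hSk, Finset.card_image_of_injective _ π.injective]
    exact hcardfilter k hk
  have hSsum : ∀ k, k ≤ M + 1 → (∑ s ∈ Sk k, Δ s) = ∑ j ∈ Finset.range k, g j := by
    intro k hk
    rw [hSk, Finset.sum_image (fun a _ b _ h => π.injective h)]
    exact hsumfilter k hk
  have hSmem : ∀ k (τ : Fin (M+1)), τ ∈ Sk k ↔ ((π.symm τ : Fin (M+1)) : ℕ) < k := by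
    intro k τ
    simp only [hSk, Finset.mem_image, Finset.mem_filter, Finset.mem_univ, true_and]
    constructor
    · rintro ⟨i, hi, rfl⟩; simpa using hi
    · intro h; exact ⟨π.symm τ, h, π.apply_symm_apply τ⟩
  have hSmemc : ∀ k (τ : Fin (M+1)), τ ∈ (Sk k)ᶜ ↔ k ≤ ((π.symm τ : Fin (M+1)) : ℕ) := by
    intro k τ
    rw [Finset.mem_compl, hSmem]
    omega
  -- value bounds for members and non-members
  have hmemval : ∀ k, 1 ≤ k → k ≤ M + 1 → ∀ σ ∈ Sk k, Δ σ ≤ g (k - 1) := by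
    intro k hk1 hkn σ hσ
    rw [hSmem] at hσ
    have h1 : Δ σ = g ((π.symm σ : Fin (M+1)) : ℕ) := by
      rw [hgval _ (π.symm σ).isLt]
      simp
    rw [h1]
    exact hgmono _ _ (by omega) (by omega)
  have hmemvalc : ∀ k, k < M + 1 → ∀ τ ∈ (Sk k)ᶜ, g k ≤ Δ τ := by
    intro k hkn τ hτ
    rw [hSmemc] at hτ
    have h1 : Δ τ = g ((π.symm τ : Fin (M+1)) : ℕ) := by
      rw [hgval _ (π.symm τ).isLt]
      simp
    rw [h1]
    exact hgmono _ _ hτ (π.symm τ).isLt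
  -- the defining predicate
  by_cases hex : ∃ k, (2 ≤ k ∧ k ≤ M ∧ (∑ j ∈ Finset.range k, g j) < (k - 1) * g k)
  · -- take the smallest such k, together with minimality
    obtain ⟨k0, hk02, hk0M, hk0lt, hmin⟩ :
        ∃ k0, 2 ≤ k0 ∧ k0 ≤ M ∧ (∑ j ∈ Finset.range k0, g j) < (k0 - 1) * g k0 ∧
          ∀ j, 2 ≤ j → j ≤ M → j < k0 →
            (j - 1) * g j ≤ ∑ i ∈ Finset.range j, g i := by
      obtain ⟨h1, h2, h3⟩ := Nat.find_spec hex
      refine ⟨Nat.find hex, h1, h2, h3, ?_⟩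
      intro j hj2 hjM hjk
      have := Nat.find_min hex hjk
      push_neg at this
      exact this hj2 hjM
    have hk0n : k0 ≤ M + 1 := by omega
    have hk0n' : k0 < M + 1 := by omega
    have hsplit : ∑ i ∈ Finset.range k0, g i
        = (∑ i ∈ Finset.range (k0 - 1), g i) + g (k0 - 1) := by
      have h : k0 = (k0 - 1) + 1 := by omega
      rw [h, Finset.sum_range_succ]
      congr 2
    -- claim B : (k0-1) * g (k0-1) ≤ sum over range k0
    have hB : (k0 - 1) * g (k0 - 1) ≤ ∑ i ∈ Finset.range k0, g i := by
      rcases Nat.lt_or_ge k0 3 with h3 | h3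
      · -- k0 = 2
        have hk2 : k0 = 2 := by omega
        subst hk2
        rw [Finset.sum_range_succ]
        simp [Nat.le_add_left]
      · -- k0 ≥ 3 : use minimality at k0 - 1
        have h1 := hmin (k0 - 1) (by omega) (by omega) (by omega)
        have h2 : k0 - 1 - 1 = k0 - 2 := by omega
        rw [h2] at h1
        rw [hsplit]
        have h4 : (k0 - 2) * g (k0 - 1) + g (k0 - 1) = (k0 - 1) * g (k0 - 1) := by
          have h5 : k0 - 2 + 1 = k0 - 1 := by omega
          rw [← h5, Nat.succ_mul, h5]
        omega
    -- claim A : g (k0 - 1) < g k0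
    have hA : g (k0 - 1) < g k0 := by
      by_contra hcon
      push_neg at hcon
      have h1 : (k0 - 1) * g k0 ≤ (k0 - 1) * g (k0 - 1) := Nat.mul_le_mul_left _ hcon
      omega
    refine ⟨Sk k0, ?_, ?_, ?_, ?_⟩
    · rw [hScard k0 hk0n]; exact hk02
    · intro σ hσ τ hτ
      calc Δ σ ≤ g (k0 - 1) := hmemval k0 (by omega) hk0n σ hσ
        _ < g k0 := hA
        _ ≤ Δ τ := hmemvalc k0 hk0n' τ hτ
    · intro σ hσ
      rw [hScard k0 hk0n, hSsum k0 hk0n]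
      calc (k0 - 1) * Δ σ ≤ (k0 - 1) * g (k0 - 1) :=
            Nat.mul_le_mul_left _ (hmemval k0 (by omega) hk0n σ hσ)
        _ ≤ _ := hB
    · intro _
      refine ⟨π ⟨k0, hk0n'⟩, ?_, ?_⟩
      · rw [hSmemc]; simp
      · rw [hScard k0 hk0n, hSsum k0 hk0n, ← hgval k0 hk0n']
        exact hk0lt
  · -- no such k: take everything
    push_neg at hex
    have hcard : (Finset.univ : Finset (Fin (M+1))).card = M + 1 := by simp
    have hSn : Sk (M+1) = Finset.univ := by
      apply Finset.eq_univ_of_card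
      rw [hScard (M+1) le_rfl]
      simp
    have hsumall : (∑ s ∈ (Finset.univ : Finset (Fin (M+1))), Δ s)
        = ∑ j ∈ Finset.range (M+1), g j := by
      rw [← hSn, hSsum (M+1) le_rfl]
    refine ⟨Finset.univ, ?_, ?_, ?_, ?_⟩
    · rw [hcard]; omega
    · intro σ _ τ hτ
      simp at hτ
    · intro σ _
      have hσval : Δ σ ≤ g M := by
        have h := hmemval (M+1) (by omega) le_rfl σ (by rw [hSn]; exact Finset.mem_univ σ)
        simp at h
        exact h
      rw [hcard, hsumall]
      have hlast : ∑ j ∈ Finset.range (M+1), g j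
          = (∑ j ∈ Finset.range M, g j) + g M := Finset.sum_range_succ _ _
      have hMsum : (M - 1) * g M ≤ ∑ j ∈ Finset.range M, g j := by
        rcases Nat.lt_or_ge M 2 with h2 | h2
        · have hM1 : M = 1 := by omega
          subst hM1
          simp
        · have h := hex M
          specialize h h2 le_rfl
          omega
      have h1 : (M + 1 - 1) * Δ σ ≤ M * g M := by
        have := Nat.mul_le_mul_left M hσval
        simpa using this
      have h2 : M * g M = (M - 1) * g M + g M := by
        have h3 : M - 1 + 1 = M := by omega
        rw [← h3, Nat.succ_mul, h3]
      omega
    · intro h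
      simp at h
end
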